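/- Under the same assumptions (W continuous, vanishing exactly on E, I converging on B_δ(E) with lim_{d(x,E)→0} I(x) = 0, φ a continuous flow), the function I(x) = ∫₀^∞ W(φ(s,x)) ds is continuous at every point x of the domain of attraction D. -/

import Mathlib

open MeasureTheory Metric Set Filter

/-- `I(x) = ∫₀^∞ W(φ(s,x)) ds` is continuous at every point of the
domain of attraction `D`. -/
theorem zubov_integral_continuous_on_DOA
    (n : ℕ) (φ : ℝ → EuclideanSpace ℝ (Fin n) → EuclideanSpace ℝ (Fin n))
    (hφ0 : ∀ x, φ 0 x = x)
    (hφsemi : ∀ t s : ℝ, 0 ≤ t → 0 ≤ s → ∀ x, φ (t + s) x = φ t (φ s x))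
    (hφcont : Continuous fun p : ℝ × EuclideanSpace ℝ (Fin n) => φ p.1 p.2)
    (E : Set (EuclideanSpace ℝ (Fin n))) (hE : IsClosed E)
    (hEinv : ∀ x ∈ E, ∀ t : ℝ, 0 ≤ t → φ t x ∈ E)
    (W : EuclideanSpace ℝ (Fin n) → ℝ) (hWcont : Continuous W)
    (hW0 : ∀ x ∈ E, W x = 0) (hWpos : ∀ x ∉ E, 0 < W x)
    (δ : ℝ) (hδ : 0 < δ)
    (hconv : ∀ y, infDist y E < δ → IntegrableOn (fun s => W (φ s y)) (Set.Ici (0 : ℝ)))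
    (hIlim : ∀ ε > 0, ∃ η > 0, ∀ y, infDist y E < η → infDist y E < δ →
      ∫ s in Set.Ici (0 : ℝ), W (φ s y) < ε)
    (x : EuclideanSpace ℝ (Fin n))
    (hx : Tendsto (fun t => infDist (φ t x) E) atTop (nhds 0)) :
    ContinuousAt (fun y => ∫ s in Set.Ici (0 : ℝ), W (φ s y)) x := by
  -- W is nonnegative everywhere
  have hWnn : ∀ z, 0 ≤ W z := by
    intro z; by_cases hz : z ∈ E
    · exact le_of_eq (hW0 z hz).symm
    · exact (hWpos z hz).le
  have hcontWφ : Continuous fun p : ℝ × EuclideanSpace ℝ (Fin n) => W (φ p.1 p.2) :=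
    hWcont.comp hφcont
  have hconty : ∀ y, Continuous fun s => W (φ s y) := fun y =>
    hcontWφ.comp (continuous_id.prodMk continuous_const)
  have hemb : ∀ T : ℝ, MeasurableEmbedding (fun u : ℝ => u + T) := fun T =>
    (Homeomorph.addRight T).isClosedEmbedding.measurableEmbedding
  have hpre : ∀ T : ℝ, (fun u : ℝ => u + T) ⁻¹' Set.Ici T = Set.Ici (0 : ℝ) := by
    intro T; rw [preimage_add_const_Ici]; simp
  -- tail identity: ∫_{[T,∞)} W(φ s y) = I(φ T y)
  have tail_eq : ∀ T : ℝ, 0 ≤ T → ∀ y,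
      ∫ s in Set.Ici T, W (φ s y) = ∫ u in Set.Ici (0 : ℝ), W (φ u (φ T y)) := by
    intro T hT y
    have h1 : ∫ u in (fun u : ℝ => u + T) ⁻¹' Set.Ici T, W (φ (u + T) y)
        = ∫ s in Set.Ici T, W (φ s y) :=
      (measurePreserving_add_right volume T).setIntegral_preimage_emb (hemb T)
        (fun s => W (φ s y)) (Set.Ici T)
    rw [hpre T] at h1
    rw [← h1]
    refine setIntegral_congr_fun measurableSet_Ici fun u hu => ?_
    rw [hφsemi u T hu hT]
  -- tail integrability
  have tail_int : ∀ T : ℝ, 0 ≤ T → ∀ y, infDist (φ T y) E < δ →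
      IntegrableOn (fun s => W (φ s y)) (Set.Ici T) := by
    intro T hT y hy
    have h0 : IntegrableOn (fun u => W (φ u (φ T y))) (Set.Ici (0 : ℝ)) := hconv _ hy
    have h1 : IntegrableOn (fun u => W (φ (u + T) y)) (Set.Ici (0 : ℝ)) := by
      refine h0.congr_fun (fun u hu => ?_) measurableSet_Ici
      rw [hφsemi u T hu hT]
    have h2 : IntegrableOn (fun s => W (φ s y)) (Set.Ici T)
        (Measure.map (fun u : ℝ => u + T) volume) := by
      rw [(hemb T).integrableOn_map_iff]
      rw [hpre T]; exact h1
    rwa [map_add_right_eq_self volume T] at h2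
  -- splitting
  have split : ∀ T : ℝ, 0 ≤ T → ∀ y, IntegrableOn (fun s => W (φ s y)) (Set.Ici T) →
      ∫ s in Set.Ici (0 : ℝ), W (φ s y)
        = (∫ s in Set.Ico (0 : ℝ) T, W (φ s y)) + ∫ s in Set.Ici T, W (φ s y) := by
    intro T hT y htail
    have hIco : IntegrableOn (fun s => W (φ s y)) (Set.Ico 0 T) :=
      ((hconty y).integrableOn_Icc).mono_set Set.Ico_subset_Icc_self
    have hdisj : Disjoint (Set.Ico (0 : ℝ) T) (Set.Ici T) :=
      Set.disjoint_left.mpr fun s hs hs' => hs.2.not_ge hs'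
    have hunion : Set.Ico (0 : ℝ) T ∪ Set.Ici T = Set.Ici 0 := Set.Ico_union_Ici_eq_Ici hT
    rw [← hunion, setIntegral_union hdisj measurableSet_Ici hIco htail]
  -- continuity of the front part
  have front_cont : ∀ T : ℝ, 0 ≤ T →
      ContinuousAt (fun y => ∫ s in Set.Ico (0 : ℝ) T, W (φ s y)) x := by
    intro T hT
    obtain ⟨C, hC⟩ : ∃ C, ∀ p ∈ Set.Icc (0 : ℝ) T ×ˢ closedBall x 1, W (φ p.1 p.2) ≤ C := by
      have hK : IsCompact (Set.Icc (0 : ℝ) T ×ˢ closedBall x 1) :=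
        isCompact_Icc.prod (isCompact_closedBall x 1)
      rcases hK.exists_bound_of_continuousOn hcontWφ.continuousOn with ⟨C, hC⟩
      exact ⟨C, fun p hp => le_trans (le_abs_self _) (by simpa using hC p hp)⟩
    refine continuousAt_of_dominated (bound := fun _ => C) ?_ ?_ ?_ ?_
    · exact Eventually.of_forall fun y => ((hconty y).aestronglyMeasurable)
    · filter_upwards [closedBall_mem_nhds x one_pos] with y hy
      refine (ae_restrict_iff' measurableSet_Ico).2 (Eventually.of_forall fun s hs => ?_)
      rw [Real.norm_eq_abs, abs_of_nonneg (hWnn _)]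
      exact hC (s, y) ⟨⟨hs.1, hs.2.le⟩, hy⟩
    · exact integrableOn_const measure_Ico_lt_top.ne
    · exact Eventually.of_forall fun s =>
        (hcontWφ.comp (continuous_const.prodMk continuous_id)).continuousAt
  -- main argument
  rw [Metric.continuousAt_iff]
  intro ε hε
  obtain ⟨η, hη, hI⟩ := hIlim (ε / 4) (by linarith)
  set r := min η δ with hr
  have hr0 : 0 < r := lt_min hη hδ
  obtain ⟨T, hTr, hT0⟩ : ∃ T : ℝ, infDist (φ T x) E < r ∧ 0 ≤ T := by
    have h1 : ∀ᶠ t in atTop, infDist (φ t x) E < r := hx (Iio_mem_nhds hr0)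
    rcases (h1.and (eventually_ge_atTop 0)).exists with ⟨T, h1, h2⟩
    exact ⟨T, h1, h2⟩
  -- small tails on a neighborhood of x
  have hUopen : IsOpen {y | infDist (φ T y) E < r} := by
    have : Continuous fun y => infDist (φ T y) E :=
      (continuous_infDist_pt E).comp (hφcont.comp (continuous_const.prodMk continuous_id))
    exact isOpen_lt this continuous_const
  obtain ⟨ρ₁, hρ₁, hball₁⟩ := Metric.mem_nhds_iff.1 (hUopen.mem_nhds hTr)
  have hF := front_cont T hT0
  rw [Metric.continuousAt_iff] at hF
  obtain ⟨ρ₂, hρ₂, hball₂⟩ := hF (ε / 2) (by linarith)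
  refine ⟨min ρ₁ ρ₂, lt_min hρ₁ hρ₂, fun {y} hy => ?_⟩
  have hyU : infDist (φ T y) E < r := hball₁ (lt_of_lt_of_le hy (min_le_left _ _))
  have hxU : infDist (φ T x) E < r := hTr
  have key : ∀ z, infDist (φ T z) E < r →
      (∫ s in Set.Ici (0 : ℝ), W (φ s z)
        = (∫ s in Set.Ico (0 : ℝ) T, W (φ s z)) + ∫ s in Set.Ici T, W (φ s z)) ∧
      (0 ≤ ∫ s in Set.Ici T, W (φ s z)) ∧ (∫ s in Set.Ici T, W (φ s z)) < ε / 4 := by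
    intro z hz
    have hzδ : infDist (φ T z) E < δ := lt_of_lt_of_le hz (min_le_right _ _)
    have hzη : infDist (φ T z) E < η := lt_of_lt_of_le hz (min_le_left _ _)
    refine ⟨split T hT0 z (tail_int T hT0 z hzδ), ?_, ?_⟩
    · exact setIntegral_nonneg measurableSet_Ici fun s _ => hWnn _
    · rw [tail_eq T hT0 z]
      exact hI (φ T z) hzη hzδ
  obtain ⟨hsy, hty0, hty⟩ := key y hyU
  obtain ⟨hsx, htx0, htx⟩ := key x hxU
  have hfront : dist (∫ s in Set.Ico (0 : ℝ) T, W (φ s y))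
      (∫ s in Set.Ico (0 : ℝ) T, W (φ s x)) < ε / 2 :=
    hball₂ (lt_of_lt_of_le hy (min_le_right _ _))
  rw [Real.dist_eq] at hfront ⊢
  rw [hsy, hsx]
  have := abs_lt.1 hfront
  rw [abs_lt]
  constructor <;> [linarith [this.1]; linarith [this.2]]
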